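/- Let κ_1^0 < κ_2^0 be real numbers, T > 0, and let κ_2(·,T) be the rarefaction solution: κ_2(η,T) = κ_1^0 for η ≤ Y_b(T) = 3κ_1^0 T, κ_2(η,T) = (η − κ_1^0 T)/(2T) for Y_b(T) ≤ η ≤ Y_a(T) = (κ_1^0 + 2κ_2^0) T, and κ_2(η,T) = κ_2^0 for η ≥ Y_a(T). Set X_a(T) = −(κ_1^0 + κ_2^0) Y_a(T) + ((κ_1^0)² + κ_1^0κ_2^0 + (κ_2^0)²) T. Then for every Y with Y_b(T) ≤ Y ≤ Y_a(T), the peak trajectory X(Y,T) = ∫_Y^{Y_a(T)} ( κ_1^0 + κ_2(η,T) ) dη + X_a(T) equals the parabola X(Y,T) = −(1/(4T)) ( Y + κ_1^0 T )² + (κ_1^0)² T. -/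
import Mathlib


/-- The rarefaction-wave solution `κ₂(·,T)`. -/
noncomputable def rarefaction (k1 k2 : ℝ) (Y T : ℝ) : ℝ :=
  if Y ≤ 3 * k1 * T then k1
  else if Y ≤ (k1 + 2 * k2) * T then (Y - k1 * T) / (2 * T)
  else k2

/-- The peak trajectory `X(Y,T) = ∫_Y^{Y_a} (κ₁⁰ + κ₂(η,T)) dη + X_a(T)` of the
modulated soliton over the rarefaction fan is the parabola
`X = −(1/(4T))(Y + κ₁⁰T)² + (κ₁⁰)²T` (a parabolic-soliton). -/
theorem peak_trajectory_is_parabola (k1 k2 T : ℝ) (h : k1 < k2) (hT : 0 < T)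
    (Y : ℝ) (hYb : 3 * k1 * T ≤ Y) (hYa : Y ≤ (k1 + 2 * k2) * T) :
    (∫ η in Y..((k1 + 2 * k2) * T), (k1 + rarefaction k1 k2 η T))
      + (-(k1 + k2) * ((k1 + 2 * k2) * T)
          + (k1 ^ 2 + k1 * k2 + k2 ^ 2) * T)
    = -(1 / (4 * T)) * (Y + k1 * T) ^ 2 + k1 ^ 2 * T := by
  have hTne : (2 * T) ≠ 0 := by positivity
  have hcongr : Set.EqOn (fun η => k1 + rarefaction k1 k2 η T)
      (fun η => k1 / 2 + (1 / (2 * T)) * η) (Set.uIcc Y ((k1 + 2 * k2) * T)) := by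
    intro η hη
    rw [Set.uIcc_of_le hYa] at hη
    obtain ⟨h1, h2⟩ := hη
    have hb : 3 * k1 * T ≤ η := le_trans hYb h1
    simp only [rarefaction]
    by_cases hc : η ≤ 3 * k1 * T
    · have : η = 3 * k1 * T := le_antisymm hc hb
      rw [if_pos hc, this]
      field_simp
      ring
    · rw [if_neg hc, if_pos h2]
      field_simp
      ring
  rw [intervalIntegral.integral_congr hcongr]
  have hint : (∫ η in Y..((k1 + 2 * k2) * T), (k1 / 2 + (1 / (2 * T)) * η))
      = (k1 / 2) * (((k1 + 2 * k2) * T) - Y)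
        + (1 / (2 * T)) * ((((k1 + 2 * k2) * T) ^ 2 - Y ^ 2) / 2) := by
    rw [intervalIntegral.integral_add (intervalIntegrable_const)
      ((intervalIntegral.intervalIntegrable_id).const_mul _),
      intervalIntegral.integral_const, intervalIntegral.integral_const_mul,
      integral_id, smul_eq_mul]
    ring
  rw [hint]
  field_simp
  ring
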